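/- Let M = [[1, (3/2)a, (3/2)b], [(3/2)a, 3, 3], [(3/2)b, 3, 3]] with a, b ∈ {-1, 0, 1}. Then M is strictly copositive: xᵀMx > 0 for all nonzero x ∈ ℝ³ with nonnegative entries. -/

import Mathlib

theorem stmt_12 (a b : ℝ) (ha : a ∈ ({-1, 0, 1} : Set ℝ)) (hb : b ∈ ({-1, 0, 1} : Set ℝ)) :
    ∀ x : Fin 3 → ℝ, (∀ i, 0 ≤ x i) → x ≠ 0 →
      0 < dotProduct x (Matrix.mulVec (!![1, (3/2)*a, (3/2)*b; (3/2)*a, 3, 3; (3/2)*b, 3, 3] : Matrix (Fin 3) (Fin 3) ℝ) x) := by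
  intro x hx hne
  have h0 := hx 0
  have h1 := hx 1
  have h2 := hx 2
  have hpos : 0 < x 0 + x 1 + x 2 := by
    rcases lt_or_eq_of_le h0 with h | h
    · linarith
    rcases lt_or_eq_of_le h1 with h' | h'
    · linarith
    rcases lt_or_eq_of_le h2 with h'' | h''
    · linarith
    exact absurd (funext fun i => by fin_cases i <;> simp [← h, ← h', ← h'']) hne
  simp [dotProduct, Matrix.mulVec, Fin.sum_univ_three,
    Matrix.cons_val_two, Matrix.tail_cons, Matrix.vecHead, Matrix.vecTail]
  rcases ha with rfl | rfl | rfl <;> rcases hb with rfl | rfl | rfl <;>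
    nlinarith [sq_nonneg (x 0 - x 1 - x 2), sq_nonneg (x 1 + x 2), sq_nonneg (x 0),
      sq_nonneg (2 * x 0 - 3 * (x 1 + x 2)), mul_nonneg h1 h2, mul_nonneg h0 h1,
      mul_nonneg h0 h2, mul_pos hpos hpos]
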